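/- Let f : [0,1]^d → ℝ be a non-negative, differentiable, continuous DR-submodular function. Then for every t ≥ 0 and every a, x ∈ [0,1]^d: f(1 − a ⊙ e^{−t x}) ≥ e^{−t} · [ f(1 − a) + Σ_{i=1}^{∞} (t^i / i!) · f(1 − a ⊙ (1−x)^i) ], where ⊙ denotes the coordinate-wise product, e^{−t x} the coordinate-wise exponential, and (1−x)^i the coordinate-wise i-th power. In particular, since every summand is non-negative, f(1 − a ⊙ e^{−t x}) ≥ e^{−t} f(1 − a). -/

import Mathlib

open scoped RealInnerProductSpace

noncomputable section

/-- Membership in the unit box `[0,1]^d`. -/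
def inBox {d : ℕ} (x : EuclideanSpace ℝ (Fin d)) : Prop :=
  ∀ i, x i ∈ Set.Icc (0 : ℝ) 1

/-- Continuous DR-submodularity: the gradient is coordinate-wise antitone on `[0,1]^d`. -/
def DRSubmodular {d : ℕ} (f : EuclideanSpace ℝ (Fin d) → ℝ) : Prop :=
  ∀ x y : EuclideanSpace ℝ (Fin d), inBox x → inBox y → (∀ i, x i ≤ y i) →
    ∀ i, gradient f y i ≤ gradient f x i

/-- The exponential reparametrization `h_z(x) = 1 - e^{-z x}` (coordinate-wise). -/
def hmap {d : ℕ} (z : ℝ) (x : EuclideanSpace ℝ (Fin d)) : EuclideanSpace ℝ (Fin d) :=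
  WithLp.toLp 2 (fun i => 1 - Real.exp (-(z * x i)))

/-- Coordinate-wise probabilistic sum `x ⊕ y = 1 - (1-x) ⊙ (1-y)`. -/
def psum {d : ℕ} (x y : EuclideanSpace ℝ (Fin d)) : EuclideanSpace ℝ (Fin d) :=
  WithLp.toLp 2 (fun i => 1 - (1 - x i) * (1 - y i))

/-- Coordinate-wise (Hadamard) product. -/
def had {d : ℕ} (u v : EuclideanSpace ℝ (Fin d)) : EuclideanSpace ℝ (Fin d) :=
  WithLp.toLp 2 (fun i => u i * v i)

/-- Coordinate-wise exponential `e^{-z x}`. -/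
def expv {d : ℕ} (z : ℝ) (x : EuclideanSpace ℝ (Fin d)) : EuclideanSpace ℝ (Fin d) :=
  WithLp.toLp 2 (fun i => Real.exp (-(z * x i)))

/-- The surrogate potential
`F(x) = ∫₀¹ (e^{z-1} / ((1-e⁻¹) z)) (f(1 - e^{-z x}) - f(0)) dz`. -/
def surrogate {d : ℕ} (f : EuclideanSpace ℝ (Fin d) → ℝ)
    (x : EuclideanSpace ℝ (Fin d)) : ℝ :=
  ∫ z in (0:ℝ)..1, (Real.exp (z - 1) / ((1 - Real.exp (-1)) * z)) * (f (hmap z x) - f 0)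

/-- A set `K ⊆ [0,1]^d` is down-closed if `y ∈ K` and `0 ≤ x ≤ y` imply `x ∈ K`. -/
def DownClosed {d : ℕ} (K : Set (EuclideanSpace ℝ (Fin d))) : Prop :=
  ∀ y ∈ K, ∀ x : EuclideanSpace ℝ (Fin d), (∀ i, 0 ≤ x i) → (∀ i, x i ≤ y i) → x ∈ K


lemma hasDerivAt_euc {d : ℕ} {u : ℝ → EuclideanSpace ℝ (Fin d)}
    {u' : EuclideanSpace ℝ (Fin d)} {s : ℝ}
    (h : ∀ j, HasDerivAt (fun r => u r j) (u' j) s) : HasDerivAt u u' s := by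
  have hp : HasDerivAt (fun r => (fun j => u r j : ∀ _ : Fin d, ℝ))
      (fun j => u' j : ∀ _ : Fin d, ℝ) s := hasDerivAt_pi.2 h
  have := ((PiLp.continuousLinearEquiv 2 ℝ (fun _ : Fin d => ℝ)).symm.hasFDerivAt
    (x := (fun j => u s j : ∀ _ : Fin d, ℝ))).comp_hasDerivAt s hp
  exact this

lemma grad_apply {d : ℕ} (f : EuclideanSpace ℝ (Fin d) → ℝ) (hdiff : Differentiable ℝ f)
    (u z : EuclideanSpace ℝ (Fin d)) :
    fderiv ℝ f u z = ∑ j, gradient f u j * z j := by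
  have h : HasFDerivAt f (InnerProductSpace.toDual ℝ _ (gradient f u)) u :=
    hasGradientAt_iff_hasFDerivAt.mp (hdiff u).hasGradientAt
  rw [h.fderiv]
  rw [InnerProductSpace.toDual_apply_apply, PiLp.inner_apply]
  simp only [RCLike.inner_apply, conj_trivial, mul_comm]

lemma key_ineq {d : ℕ} (f : EuclideanSpace ℝ (Fin d) → ℝ) (hdiff : Differentiable ℝ f)
    (hDR : DRSubmodular f) (u v : EuclideanSpace ℝ (Fin d))
    (hu : inBox u) (hv : inBox v) (huv : ∀ j, u j ≤ v j) :
    f v ≤ f u + ∑ j, gradient f u j * (v j - u j) := by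
  set C : ℝ := ∑ j, gradient f u j * (v j - u j) with hC
  set γ : ℝ → EuclideanSpace ℝ (Fin d) := fun r => WithLp.toLp 2 (fun j => u j + r * (v j - u j)) with hγ
  set w : EuclideanSpace ℝ (Fin d) := WithLp.toLp 2 (fun j => v j - u j) with hw
  have hγbox : ∀ r ∈ Set.Icc (0:ℝ) 1, inBox (γ r) := by
    intro r hr j
    have h1 := (hu j).1; have h2 := (hu j).2; have h3 := (hv j).1; have h4 := (hv j).2
    have h5 := huv j
    simp only [hγ, PiLp.toLp_apply]
    constructor <;> nlinarith [hr.1, hr.2]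
  have hγle : ∀ r ∈ Set.Icc (0:ℝ) 1, ∀ j, u j ≤ γ r j := by
    intro r hr j
    have h5 := huv j
    simp only [hγ, PiLp.toLp_apply]
    nlinarith [hr.1]
  have hγd : ∀ r : ℝ, HasDerivAt (fun r => f (γ r)) (fderiv ℝ f (γ r) w) r := by
    intro r
    have hy : HasDerivAt γ w r := by
      apply hasDerivAt_euc
      intro j
      exact ((hasDerivAt_mul_const (v j - u j)).const_add (u j)).congr_deriv rfl
    exact (hdiff (γ r)).hasFDerivAt.comp_hasDerivAt r hy
  set φ : ℝ → ℝ := fun r => C * r - f (γ r) with hφ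
  have hφd : ∀ r : ℝ, HasDerivAt φ (C - fderiv ℝ f (γ r) w) r := by
    intro r
    have h1 : HasDerivAt (fun r : ℝ => C * r) C r := by
      simpa using (hasDerivAt_id r).const_mul C
    exact h1.sub (hγd r)
  have hmono : MonotoneOn φ (Set.Icc (0:ℝ) 1) := by
    apply monotoneOn_of_deriv_nonneg (convex_Icc 0 1)
    · exact (fun r _ => ((hφd r).differentiableAt.continuousAt.continuousWithinAt))
    · exact fun r _ => ((hφd r).differentiableAt.differentiableWithinAt)
    · intro r hr
      rw [interior_Icc] at hr
      rw [(hφd r).deriv]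
      have hbox : inBox (γ r) := hγbox r ⟨hr.1.le, hr.2.le⟩
      have hle : ∀ j, u j ≤ γ r j := hγle r ⟨hr.1.le, hr.2.le⟩
      have : fderiv ℝ f (γ r) w ≤ C := by
        rw [grad_apply f hdiff, hC]
        apply Finset.sum_le_sum
        intro j _
        have := hDR u (γ r) hu hbox hle j
        have hwj : (0:ℝ) ≤ v j - u j := sub_nonneg.2 (huv j)
        have : gradient f (γ r) j * w j ≤ gradient f u j * w j := by
          apply mul_le_mul_of_nonneg_right this hwj
        simpa [hw] using this
      linarith
  have h01 : φ 0 ≤ φ 1 := hmono (by norm_num) (by norm_num) (by norm_num)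
  have hγ0 : γ 0 = u := by ext j; simp [hγ]
  have hγ1 : γ 1 = v := by ext j; simp [hγ]
  rw [hφ] at h01
  simp only [hγ0, hγ1, mul_zero, mul_one, zero_sub] at h01
  linarith

/-- The moving point `1 - a ⊙ e^{-s x} ⊙ (1-x)^i`. -/
def Yv {d : ℕ} (a x : EuclideanSpace ℝ (Fin d)) (i : ℕ) (s : ℝ) : EuclideanSpace ℝ (Fin d) :=
  WithLp.toLp 2 (fun j => 1 - a j * Real.exp (-(s * x j)) * (1 - x j) ^ i)

/-- Its `s`-derivative. -/
def Wv {d : ℕ} (a x : EuclideanSpace ℝ (Fin d)) (i : ℕ) (s : ℝ) : EuclideanSpace ℝ (Fin d) :=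
  WithLp.toLp 2 (fun j => a j * x j * Real.exp (-(s * x j)) * (1 - x j) ^ i)

lemma boxY {d : ℕ} {a x : EuclideanSpace ℝ (Fin d)} (ha : inBox a) (hx : inBox x)
    (i : ℕ) {s : ℝ} (hs : 0 ≤ s) : inBox (Yv a x i s) := by
  intro j
  have h1 := (ha j).1; have h2 := (ha j).2; have h3 := (hx j).1; have h4 := (hx j).2
  have he1 : Real.exp (-(s * x j)) ≤ 1 := by
    rw [Real.exp_le_one_iff]
    nlinarith
  have he0 : 0 < Real.exp (-(s * x j)) := Real.exp_pos _
  have hp0 : 0 ≤ (1 - x j) ^ i := pow_nonneg (by linarith) i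
  have hp1 : (1 - x j) ^ i ≤ 1 := pow_le_one₀ (by linarith) (by linarith)
  have q1 : 0 ≤ a j * Real.exp (-(s * x j)) * (1 - x j) ^ i :=
    mul_nonneg (mul_nonneg h1 he0.le) hp0
  have q0 : a j * Real.exp (-(s * x j)) ≤ 1 := by nlinarith
  have q2 : a j * Real.exp (-(s * x j)) * (1 - x j) ^ i ≤ 1 := by nlinarith
  simp only [Yv, PiLp.toLp_apply, Set.mem_Icc]
  constructor <;> linarith

lemma hderivY {d : ℕ} (f : EuclideanSpace ℝ (Fin d) → ℝ) (hdiff : Differentiable ℝ f)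
    (a x : EuclideanSpace ℝ (Fin d)) (i : ℕ) (s : ℝ) :
    HasDerivAt (fun r => f (Yv a x i r)) (fderiv ℝ f (Yv a x i s) (Wv a x i s)) s := by
  have hy : HasDerivAt (fun r => Yv a x i r) (Wv a x i s) s := by
    apply hasDerivAt_euc
    intro j
    have h1 : HasDerivAt (fun r : ℝ => -(r * x j)) (-(x j)) s := by
      exact (hasDerivAt_mul_const (x j)).neg
    have h2 : HasDerivAt (fun r : ℝ => Real.exp (-(r * x j)))
        (Real.exp (-(s * x j)) * (-(x j))) s := h1.exp
    have h3 := ((h2.const_mul (a j)).mul_const ((1 - x j) ^ i)).const_sub 1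
    refine h3.congr_deriv ?_
    simp only [Wv, PiLp.toLp_apply]; ring
  exact (hdiff (Yv a x i s)).hasFDerivAt.comp_hasDerivAt s hy

lemma hstep {d : ℕ} (f : EuclideanSpace ℝ (Fin d) → ℝ) (hdiff : Differentiable ℝ f)
    (hDR : DRSubmodular f) (a x : EuclideanSpace ℝ (Fin d)) (ha : inBox a) (hx : inBox x)
    (i : ℕ) {s : ℝ} (hs : 0 ≤ s) :
    f (Yv a x (i+1) s) ≤ f (Yv a x i s) + fderiv ℝ f (Yv a x i s) (Wv a x i s) := by
  have hle : ∀ j, Yv a x i s j ≤ Yv a x (i+1) s j := by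
    intro j
    have h1 := (ha j).1; have h3 := (hx j).1; have h4 := (hx j).2
    have he0 : 0 < Real.exp (-(s * x j)) := Real.exp_pos _
    have hp0 : 0 ≤ (1 - x j) ^ i := pow_nonneg (by linarith) i
    have hq : 0 ≤ a j * Real.exp (-(s * x j)) * (1 - x j) ^ i * x j :=
      mul_nonneg (mul_nonneg (mul_nonneg h1 he0.le) hp0) h3
    simp only [Yv, PiLp.toLp_apply, pow_succ]
    nlinarith [hq]
  have := key_ineq f hdiff hDR (Yv a x i s) (Yv a x (i+1) s)
    (boxY ha hx i hs) (boxY ha hx (i+1) hs) hle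
  have hsum : ∑ j, gradient f (Yv a x i s) j * (Yv a x (i+1) s j - Yv a x i s j)
      = fderiv ℝ f (Yv a x i s) (Wv a x i s) := by
    rw [grad_apply f hdiff]
    apply Finset.sum_congr rfl
    intro j _
    have : Yv a x (i+1) s j - Yv a x i s j = Wv a x i s j := by
      simp only [Yv, Wv, PiLp.toLp_apply, pow_succ]; ring
    rw [this]
  linarith [this, hsum.le, hsum.ge]

lemma mainQ {d : ℕ} (f : EuclideanSpace ℝ (Fin d) → ℝ) (hdiff : Differentiable ℝ f)
    (hpos : ∀ x, inBox x → 0 ≤ f x) (hDR : DRSubmodular f)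
    (a x : EuclideanSpace ℝ (Fin d)) (ha : inBox a) (hx : inBox x) :
    ∀ (N i : ℕ) (s : ℝ), 0 ≤ s →
      ∑ k ∈ Finset.range N, s ^ k / (Nat.factorial k : ℝ) * f (Yv a x (i + k) 0) ≤
        Real.exp s * f (Yv a x i s) := by
  intro N
  induction N with
  | zero =>
    intro i s hs
    simp only [Finset.range_zero, Finset.sum_empty]
    exact mul_nonneg (Real.exp_pos s).le (hpos _ (boxY ha hx i hs))
  | succ N ih =>
    intro i s hs
    set ψ : ℝ → ℝ := fun r => Real.exp r * f (Yv a x i r)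
      - ∑ k ∈ Finset.range (N+1), r ^ k / (Nat.factorial k : ℝ) * f (Yv a x (i + k) 0) with hψ
    have hψd : ∀ r : ℝ, HasDerivAt ψ
        (Real.exp r * (f (Yv a x i r) + fderiv ℝ f (Yv a x i r) (Wv a x i r))
          - ∑ k ∈ Finset.range N, r ^ k / (Nat.factorial k : ℝ) * f (Yv a x (i + 1 + k) 0)) r := by
      intro r
      have h1 : HasDerivAt (fun r => Real.exp r * f (Yv a x i r))
          (Real.exp r * f (Yv a x i r) + Real.exp r * fderiv ℝ f (Yv a x i r) (Wv a x i r)) r :=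
        (Real.hasDerivAt_exp r).mul (hderivY f hdiff a x i r)
      have h2 : HasDerivAt (fun r : ℝ => ∑ k ∈ Finset.range (N+1),
            r ^ k / (Nat.factorial k : ℝ) * f (Yv a x (i + k) 0))
          (∑ k ∈ Finset.range (N+1),
            (k : ℝ) * r ^ (k - 1) / (Nat.factorial k : ℝ) * f (Yv a x (i + k) 0)) r := by
        apply HasDerivAt.fun_sum
        intro k _
        exact ((hasDerivAt_pow k r).div_const _).mul_const _
      have hsumeq : ∑ k ∈ Finset.range (N+1),
            (k : ℝ) * r ^ (k - 1) / (Nat.factorial k : ℝ) * f (Yv a x (i + k) 0)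
          = ∑ k ∈ Finset.range N, r ^ k / (Nat.factorial k : ℝ) * f (Yv a x (i + 1 + k) 0) := by
        rw [Finset.sum_range_succ']
        simp only [Nat.cast_zero, zero_mul, Nat.factorial_zero, Nat.cast_one, zero_div,
          zero_mul, add_zero]
        apply Finset.sum_congr rfl
        intro k _
        have hidx : i + (k + 1) = i + 1 + k := by omega
        rw [hidx]
        have hfac : (Nat.factorial (k+1) : ℝ) = (k+1) * Nat.factorial k := by
          rw [Nat.factorial_succ]; push_cast; ring
        rw [hfac]
        have hk : ((k:ℝ) + 1) ≠ 0 := by positivity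
        have hf : (Nat.factorial k : ℝ) ≠ 0 := Nat.cast_ne_zero.2 (Nat.factorial_ne_zero k)
        simp only [Nat.add_sub_cancel, Nat.cast_add, Nat.cast_one]
        field_simp
      rw [← hsumeq]
      have := h1.sub h2
      refine this.congr_deriv ?_
      ring
    have hmono : MonotoneOn ψ (Set.Ici (0:ℝ)) := by
      apply monotoneOn_of_deriv_nonneg (convex_Ici 0)
      · exact fun r _ => (hψd r).differentiableAt.continuousAt.continuousWithinAt
      · exact fun r _ => (hψd r).differentiableAt.differentiableWithinAt
      · intro r hr
        rw [interior_Ici] at hr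
        have hr0 : (0:ℝ) ≤ r := hr.le
        rw [(hψd r).deriv]
        have hst := hstep f hdiff hDR a x ha hx i hr0
        have hih := ih (i+1) r hr0
        have he : (0:ℝ) < Real.exp r := Real.exp_pos r
        nlinarith [hih, hst, he]
    have hψ0 : ψ 0 = 0 := by
      simp only [hψ, Real.exp_zero, one_mul]
      rw [Finset.sum_range_succ']
      simp [zero_pow]
    have := hmono (Set.self_mem_Ici) (Set.mem_Ici.2 hs) hs
    rw [hψ0] at this
    simp only [hψ] at this
    linarith

/-- Buchbinder–Feldman Lemma 4.1, constant-direction case.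
For a non-negative, differentiable, continuous DR-submodular `f`, every `t ≥ 0` and
`a, x ∈ [0,1]^d`:
`f(1 - a ⊙ e^{-t x}) ≥ e^{-t} [ f(1-a) + Σ_{i≥1} (tⁱ/i!) f(1 - a ⊙ (1-x)ⁱ) ]`,
and in particular (every summand being non-negative) `f(1 - a ⊙ e^{-t x}) ≥ e^{-t} f(1-a)`. -/
theorem stmt10 {d : ℕ} (f : EuclideanSpace ℝ (Fin d) → ℝ)
    (hdiff : Differentiable ℝ f) (hpos : ∀ x, inBox x → 0 ≤ f x)
    (hDR : DRSubmodular f)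
    (t : ℝ) (ht : 0 ≤ t) (a x : EuclideanSpace ℝ (Fin d))
    (ha : inBox a) (hx : inBox x) :
    Real.exp (-t) *
        (f (WithLp.toLp 2 (fun j => 1 - a j) : EuclideanSpace ℝ (Fin d)) +
          ∑' i : ℕ, (t ^ (i + 1) / (Nat.factorial (i + 1) : ℝ)) *
            f (WithLp.toLp 2 (fun j => 1 - a j * (1 - x j) ^ (i + 1)) : EuclideanSpace ℝ (Fin d))) ≤
      f (WithLp.toLp 2 (fun j => 1 - a j * Real.exp (-(t * x j))) : EuclideanSpace ℝ (Fin d)) ∧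
    Real.exp (-t) * f (WithLp.toLp 2 (fun j => 1 - a j) : EuclideanSpace ℝ (Fin d)) ≤
      f (WithLp.toLp 2 (fun j => 1 - a j * Real.exp (-(t * x j))) : EuclideanSpace ℝ (Fin d)) := by

  set u : ℕ → ℝ := fun k => t ^ k / (Nat.factorial k : ℝ) * f (Yv a x k 0) with hu
  have hnn : ∀ k, 0 ≤ u k := by
    intro k
    exact mul_nonneg (div_nonneg (pow_nonneg ht k) (Nat.cast_nonneg _))
      (hpos _ (boxY ha hx k le_rfl))
  have hble : ∀ n, ∑ k ∈ Finset.range n, u k ≤ Real.exp t * f (Yv a x 0 t) := by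
    intro n
    have := mainQ f hdiff hpos hDR a x ha hx n 0 t ht
    simpa using this
  have hsum : Summable u := summable_of_sum_range_le hnn hble
  have hts : ∑' k, u k ≤ Real.exp t * f (Yv a x 0 t) := Real.tsum_le_of_sum_range_le hnn hble
  have hfa : f (WithLp.toLp 2 (fun j => 1 - a j) : EuclideanSpace ℝ (Fin d)) = f (Yv a x 0 0) := by
    apply congrArg f
    ext j
    simp [Yv]
  have hft : f (WithLp.toLp 2 (fun j => 1 - a j * Real.exp (-(t * x j))) : EuclideanSpace ℝ (Fin d))
      = f (Yv a x 0 t) := by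
    apply congrArg f
    ext j
    simp [Yv]
  have hfi : ∀ k : ℕ, (t ^ (k + 1) / (Nat.factorial (k + 1) : ℝ)) *
      f (WithLp.toLp 2 (fun j => 1 - a j * (1 - x j) ^ (k + 1)) : EuclideanSpace ℝ (Fin d)) = u (k+1) := by
    intro k
    rw [hu]
    congr 1
    apply congrArg f
    ext j
    simp [Yv]
  have hu0 : u 0 = f (Yv a x 0 0) := by simp [hu]
  have hzadd : ∑' k, u k = u 0 + ∑' k, u (k+1) := hsum.tsum_eq_zero_add
  have hmain : f (WithLp.toLp 2 (fun j => 1 - a j) : EuclideanSpace ℝ (Fin d)) +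
      ∑' i : ℕ, (t ^ (i + 1) / (Nat.factorial (i + 1) : ℝ)) *
        f (WithLp.toLp 2 (fun j => 1 - a j * (1 - x j) ^ (i + 1)) : EuclideanSpace ℝ (Fin d))
      = ∑' k, u k := by
    rw [hzadd, hfa, hu0]
    congr 1
    exact tsum_congr hfi
  have hexp : Real.exp (-t) * Real.exp t = 1 := by
    rw [← Real.exp_add]; simp
  constructor
  · rw [hmain, hft]
    calc Real.exp (-t) * ∑' k, u k ≤ Real.exp (-t) * (Real.exp t * f (Yv a x 0 t)) :=
          mul_le_mul_of_nonneg_left hts (Real.exp_pos _).le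
      _ = f (Yv a x 0 t) := by rw [← mul_assoc, hexp, one_mul]
  · have h1 : Real.exp (-t) * f (WithLp.toLp 2 (fun j => 1 - a j) : EuclideanSpace ℝ (Fin d)) ≤
        Real.exp (-t) *
        (f (WithLp.toLp 2 (fun j => 1 - a j) : EuclideanSpace ℝ (Fin d)) +
          ∑' i : ℕ, (t ^ (i + 1) / (Nat.factorial (i + 1) : ℝ)) *
            f (WithLp.toLp 2 (fun j => 1 - a j * (1 - x j) ^ (i + 1)) : EuclideanSpace ℝ (Fin d))) := by
      apply mul_le_mul_of_nonneg_left _ (Real.exp_pos _).le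
      have : 0 ≤ ∑' k, u (k+1) := tsum_nonneg (fun k => hnn (k+1))
      nlinarith [tsum_congr (L := SummationFilter.unconditional ℕ) hfi]
    refine h1.trans ?_
    rw [hmain, hft]
    calc Real.exp (-t) * ∑' k, u k ≤ Real.exp (-t) * (Real.exp t * f (Yv a x 0 t)) :=
          mul_le_mul_of_nonneg_left hts (Real.exp_pos _).le
      _ = f (Yv a x 0 t) := by rw [← mul_assoc, hexp, one_mul]
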